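/- Let G be a group, let L ≤ H be finite subgroups of G, and let g ∈ G satisfy g² ∈ L. Assume |L : L ∩ L^g| = |H : H ∩ H^g| = 4 and L ∩ L^g ≠ L ∩ H^g (the pseudocover condition of Theorem 1.2). Then L ∩ L^g < L ∩ H^g < H ∩ H^g is a chain of proper inclusions, so |H ∩ H^g| ≥ 4·|L ∩ L^g| and hence |H| ≥ 16·|L ∩ L^g| ≥ 16. -/

import Mathlib

/-- The conjugate subgroup `H^g = g⁻¹ H g`. -/
def conjSG {G : Type*} [Group G] (H : Subgroup G) (g : G) : Subgroup G :=
  Subgroup.comap (MulAut.conj g).toMonoidHom H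

lemma mem_conjSG {G : Type*} [Group G] {H : Subgroup G} {g x : G} :
    x ∈ conjSG H g ↔ g * x * g⁻¹ ∈ H := by
  simp [conjSG, Subgroup.mem_comap]

lemma conjSG_conjSG {G : Type*} [Group G] (H : Subgroup G) (g : G) (h : g ^ 2 ∈ H) :
    conjSG (conjSG H g) g = H := by
  ext x
  rw [mem_conjSG, mem_conjSG]
  have key : g * (g * x * g⁻¹) * g⁻¹ = g ^ 2 * x * (g ^ 2)⁻¹ := by rw [pow_two]; group
  rw [key, mul_assoc, H.mul_mem_cancel_left h, H.mul_mem_cancel_right (H.inv_mem h)]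

lemma conjSG_mono {G : Type*} [Group G] {L H : Subgroup G} (h : L ≤ H) (g : G) :
    conjSG L g ≤ conjSG H g :=
  Subgroup.comap_mono h

lemma conjSG_inf {G : Type*} [Group G] (L H : Subgroup G) (g : G) :
    conjSG (L ⊓ H) g = conjSG L g ⊓ conjSG H g :=
  Subgroup.comap_inf _ _ _

lemma card_inf_mul_relindex {G : Type*} [Group G] (K H : Subgroup G) :
    Nat.card (K ⊓ H : Subgroup G) * K.relIndex H = Nat.card H := by
  have h := Subgroup.card_mul_index ((K ⊓ H).subgroupOf H)
  rwa [Nat.card_congr (Subgroup.subgroupOfEquivOfLe inf_le_right).toEquiv,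
    ← Subgroup.relIndex, Subgroup.inf_relIndex_right] at h

lemma two_mul_le_of_dvd_of_lt {a b : ℕ} (hd : a ∣ b) (hlt : a < b) : 2 * a ≤ b := by
  obtain ⟨k, rfl⟩ := hd
  rcases Nat.eq_zero_or_pos a with rfl | ha
  · simp at hlt
  have hk : 2 ≤ k := by
    by_contra hk
    interval_cases k <;> omega
  calc 2 * a = a * 2 := by ring
  _ ≤ a * k := Nat.mul_le_mul_left a hk

/-- **Lemma 5.2 (group-theoretic core).**  Let `L ≤ H` be finite subgroups of `G` and
`g ∈ G` with `g² ∈ L`.  Assume `|L : L ∩ L^g| = |H : H ∩ H^g| = 4` and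
`L ∩ L^g ≠ L ∩ H^g` (the pseudocover condition).  Then
`L ∩ L^g < L ∩ H^g < H ∩ H^g` is a chain of proper inclusions, so
`|H ∩ H^g| ≥ 4 |L ∩ L^g|`, and hence `|H| ≥ 16 |L ∩ L^g| ≥ 16`. -/
theorem pseudocover_stabilizer_bound {G : Type*} [Group G] (L H : Subgroup G) (hLH : L ≤ H)
    (hLfin : (L : Set G).Finite) (hHfin : (H : Set G).Finite)
    (g : G) (hg2 : g ^ 2 ∈ L)
    (hvalL : (conjSG L g).relIndex L = 4) (hvalH : (conjSG H g).relIndex H = 4)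
    (hne : L ⊓ conjSG L g ≠ L ⊓ conjSG H g) :
    (L ⊓ conjSG L g < L ⊓ conjSG H g ∧ L ⊓ conjSG H g < H ⊓ conjSG H g) ∧
    4 * Nat.card (L ⊓ conjSG L g : Subgroup G) ≤ Nat.card (H ⊓ conjSG H g : Subgroup G) ∧
    16 * Nat.card (L ⊓ conjSG L g : Subgroup G) ≤ Nat.card H ∧
    16 ≤ Nat.card H := by
  set A := L ⊓ conjSG L g with hA
  set B := L ⊓ conjSG H g with hB
  set C := H ⊓ conjSG H g with hC
  have hAB : A ≤ B := inf_le_inf_left L (conjSG_mono hLH g)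
  have hBC : B ≤ C := inf_le_inf_right _ hLH
  have hABlt : A < B := lt_of_le_of_ne hAB hne
  -- B < C via conjugation argument
  have hBClt : B < C := by
    refine lt_of_le_of_ne hBC fun hEq => ?_
    -- apply conjSG _ g to both sides
    have hconj : conjSG B g = conjSG C g := by rw [hEq]
    rw [hB, hC, conjSG_inf, conjSG_inf, conjSG_conjSG H g (hLH hg2)] at hconj
    -- hconj : conjSG L g ⊓ H = conjSG H g ⊓ H
    have h1 : C ≤ conjSG L g := by
      rw [hC, inf_comm, ← hconj]
      exact inf_le_left
    have h2 : C ≤ L := by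
      rw [← hEq]; exact inf_le_left
    have hCA : C ≤ A := le_inf h2 h1
    exact absurd (lt_of_lt_of_le (hEq ▸ hABlt) hCA) (lt_irrefl A)
  -- finiteness
  have hCfin : (C : Set G).Finite := hHfin.subset (by exact_mod_cast inf_le_left)
  have : Finite C := hCfin.to_subtype
  have : Finite B := (hCfin.subset hBC).to_subtype
  have : Finite A := ((hCfin.subset hBC).subset hAB).to_subtype
  -- cardinality of the chain
  have hcard_lt : ∀ {X Y : Subgroup G}, X < Y → (Y : Set G).Finite →
      Nat.card X < Nat.card Y := by
    intro X Y hXY hYfin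
    rw [← SetLike.coe_sort_coe X, ← SetLike.coe_sort_coe Y, Nat.card_coe_set_eq,
      Nat.card_coe_set_eq]
    exact Set.ncard_lt_ncard (SetLike.coe_ssubset_coe.mpr hXY) hYfin
  have hAB2 : 2 * Nat.card A ≤ Nat.card B :=
    two_mul_le_of_dvd_of_lt (Subgroup.card_dvd_of_le hAB)
      (hcard_lt hABlt (hCfin.subset hBC))
  have hBC2 : 2 * Nat.card B ≤ Nat.card C :=
    two_mul_le_of_dvd_of_lt (Subgroup.card_dvd_of_le hBC) (hcard_lt hBClt hCfin)
  have hAC4 : 4 * Nat.card A ≤ Nat.card C := by omega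
  -- |H| = 4 * |C|
  have hH4 : Nat.card H = Nat.card C * 4 := by
    have := card_inf_mul_relindex (conjSG H g) H
    rwa [hvalH, inf_comm, ← hC, eq_comm] at this
  have hApos : 1 ≤ Nat.card A := Nat.one_le_iff_ne_zero.mpr Nat.card_pos.ne'
  refine ⟨⟨hABlt, hBClt⟩, hAC4, by omega, by omega⟩
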